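/- The limit as n → ∞ of (log |B_n|)/f_{2n-1} exists and equals (1/τ³)·log 2, where τ = (1+√5)/2 is the golden mean. -/

import Mathlib

/-- The two-letter alphabet. -/
inductive Letter : Type
  | a : Letter
  | b : Letter
deriving DecidableEq

/-- A word is a finite sequence of letters. -/
abbrev Word := List Letter

/-- Concatenation set `UV = {uv : u ∈ U, v ∈ V}`. -/
def concatSet (U V : Set Word) : Set Word := {w | ∃ u ∈ U, ∃ v ∈ V, w = u ++ v}

mutual
  /-- The sets `A_n` of inflated words (indexed so that `Aset 1 = {a}`). -/
  def Aset : ℕ → Set Word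
    | 0 => ∅
    | 1 => {[Letter.a]}
    | n + 2 => concatSet (Bset (n + 1)) (concatSet (Aset (n + 1)) (Aset (n + 1)))
  /-- The sets `B_n` of inflated words (indexed so that `Bset 1 = {b}`). -/
  def Bset : ℕ → Set Word
    | 0 => ∅
    | 1 => {[Letter.b]}
    | n + 2 => concatSet (Aset (n + 1)) (Bset (n + 1)) ∪ concatSet (Bset (n + 1)) (Aset (n + 1))
end

/-- The sub-word `w[a,b] = w_a w_{a+1} … w_b` (1-indexed). -/
def wordSlice (w : Word) (i j : ℕ) : Word := (w.drop (i - 1)).take (j - i + 1)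

/-- `W[a,b] = {w[a,b] : w ∈ W}`. -/
def setSlice (W : Set Word) (i j : ℕ) : Set Word := {x | ∃ w ∈ W, x = wordSlice w i j}

/-- `x` is a sub-word (contiguous factor) of `w`. -/
def IsFactor (x w : Word) : Prop := ∃ u v : Word, w = u ++ x ++ v

/-- `F(S, m)`: the set of all sub-words of length `m` of words in `S`. -/
def FactorSet (S : Set Word) (m : ℕ) : Set Word :=
  {x | x.length = m ∧ ∃ w ∈ S, IsFactor x w}

/-- `F(A, m) = ⋃_{n ≥ 1} F(A_n, m)`. -/
def FA (m : ℕ) : Set Word := ⋃ n ∈ {n : ℕ | 1 ≤ n}, FactorSet (Aset n) m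

/-- `F(B, m) = ⋃_{n ≥ 1} F(B_n, m)`. -/
def FB (m : ℕ) : Set Word := ⋃ n ∈ {n : ℕ | 1 ≤ n}, FactorSet (Bset n) m

/-- The golden mean `τ = (1 + √5)/2`. -/
noncomputable def tau : ℝ := (1 + Real.sqrt 5) / 2

lemma aset_succ (n : ℕ) : Aset (n+2) = concatSet (Bset (n + 1)) (concatSet (Aset (n + 1)) (Aset (n + 1))) := rfl
lemma bset_succ (n : ℕ) : Bset (n+2) = concatSet (Aset (n + 1)) (Bset (n + 1)) ∪ concatSet (Bset (n + 1)) (Aset (n + 1)) := rfl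

lemma fib_shift (a b : ℕ) (h : b = a + 2) : Nat.fib b = Nat.fib a + Nat.fib (a+1) := by
  subst h; exact Nat.fib_add_two

lemma struct (n : ℕ) :
    (∀ w ∈ Aset (n+1), w.length = Nat.fib (2*n+2)) ∧
    (∀ w ∈ Bset (n+1), w.length = Nat.fib (2*n+1)) ∧
    (∀ w ∈ Aset (n+1), w.getLast? = some Letter.a) ∧
    (∀ w ∈ Aset (n+2), w[Nat.fib (2*n+2) - 1]? = some Letter.b) := by
  induction n with
  | zero =>
    refine ⟨?_, ?_, ?_, ?_⟩
    · rintro w hw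
      simp only [Aset, Set.mem_singleton_iff] at hw
      simp [hw]
    · rintro w hw
      simp only [Bset, Set.mem_singleton_iff] at hw
      simp [hw]
    · rintro w hw
      simp only [Aset, Set.mem_singleton_iff] at hw
      simp [hw]
    · rintro w hw
      rw [aset_succ] at hw
      obtain ⟨u, hu, v, hv, rfl⟩ := hw
      obtain ⟨x, hx, y, hy, rfl⟩ := hv
      simp only [Aset, Bset, Set.mem_singleton_iff] at hu hx hy
      subst hu hx hy
      decide
  | succ n ih =>
    obtain ⟨lenA, lenB, lastA, midA⟩ := ih
    have e1 : Nat.fib (2*n+3) = Nat.fib (2*n+1) + Nat.fib (2*n+2) :=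
      fib_shift _ _ (by ring)
    have e2 : Nat.fib (2*n+4) = Nat.fib (2*n+2) + Nat.fib (2*n+3) :=
      fib_shift _ _ (by ring)
    have fibApos : 0 < Nat.fib (2*n+2) := Nat.fib_pos.2 (by omega)
    have fibBpos : 0 < Nat.fib (2*n+1) := Nat.fib_pos.2 (by omega)
    have lenA' : ∀ w ∈ Aset (n+2), w.length = Nat.fib (2*(n+1)+2) := by
      rintro w hw
      rw [aset_succ] at hw
      obtain ⟨u, hu, v, hv, rfl⟩ := hw
      obtain ⟨x, hx, y, hy, rfl⟩ := hv
      simp only [List.length_append, lenB u hu, lenA x hx, lenA y hy]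
      rw [show 2*(n+1)+2 = 2*n+4 by ring, e2, e1]
      ring
    have lastA' : ∀ w ∈ Aset (n+2), w.getLast? = some Letter.a := by
      rintro w hw
      rw [aset_succ] at hw
      obtain ⟨u, hu, v, hv, rfl⟩ := hw
      obtain ⟨x, hx, y, hy, rfl⟩ := hv
      have hy0 : y ≠ [] := by
        intro h
        have := lenA y hy
        rw [h] at this
        simp at this
        omega
      rw [List.getLast?_append_of_ne_nil _ (by simp [hy0]),
          List.getLast?_append_of_ne_nil _ hy0]
      exact lastA y hy
    refine ⟨lenA', ?_, lastA', ?_⟩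
    · rintro w hw
      rw [bset_succ] at hw
      rw [show 2*(n+1)+1 = 2*n+3 by ring, e1]
      rcases hw with hw | hw <;> obtain ⟨u, hu, v, hv, rfl⟩ := hw <;>
        simp only [List.length_append]
      · rw [lenA u hu, lenB v hv]; ring
      · rw [lenB u hu, lenA v hv]
    · -- midA for n+1 : w ∈ Aset (n+3), index fib(2n+4)-1 is b
      rintro w hw
      rw [show n+1+2 = (n+1)+2 by ring, aset_succ] at hw
      obtain ⟨u, hu, v, hv, rfl⟩ := hw
      obtain ⟨x, hx, y, hy, rfl⟩ := hv
      have hulen : u.length = Nat.fib (2*n+3) := by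
        rw [bset_succ] at hu
        rcases hu with hu | hu <;> obtain ⟨p, hp, q, hq, rfl⟩ := hu <;>
          simp only [List.length_append] <;> rw [e1]
        · rw [lenA p hp, lenB q hq]; ring
        · rw [lenB p hp, lenA q hq]
      have hxlen : x.length = Nat.fib (2*n+4) := by
        have := lenA' x hx; rwa [show 2*(n+1)+2 = 2*n+4 by ring] at this
      rw [show 2*(n+1)+2 = 2*n+4 by ring]
      have hge : u.length ≤ Nat.fib (2*n+4) - 1 := by
        rw [hulen]; omega
      rw [List.getElem?_append_right hge]
      have hofs : Nat.fib (2*n+4) - 1 - u.length = Nat.fib (2*n+2) - 1 := by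
        rw [hulen]; omega
      rw [hofs]
      have hlt : Nat.fib (2*n+2) - 1 < x.length := by rw [hxlen]; omega
      rw [List.getElem?_append_left hlt]
      exact midA x hx

lemma fib_shift' (a b : ℕ) (h : b = a + 2) : Nat.fib b = Nat.fib a + Nat.fib (a+1) := by
  subst h; exact Nat.fib_add_two

lemma concat_image (U V : Set Word) :
    concatSet U V = (fun p : Word × Word => p.1 ++ p.2) '' (U ×ˢ V) := by
  ext w
  constructor
  · rintro ⟨u, hu, v, hv, rfl⟩
    exact ⟨(u, v), ⟨hu, hv⟩, rfl⟩
  · rintro ⟨⟨u, v⟩, ⟨hu, hv⟩, rfl⟩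
    exact ⟨u, hu, v, hv, rfl⟩

lemma concat_finite {U V : Set Word} (hU : U.Finite) (hV : V.Finite) :
    (concatSet U V).Finite := by
  rw [concat_image]; exact (hU.prod hV).image _

lemma concat_ncard {U V : Set Word} {L : ℕ} (hL : ∀ u ∈ U, u.length = L) :
    (concatSet U V).ncard = U.ncard * V.ncard := by
  rw [concat_image, Set.ncard_image_of_injOn, ← Nat.card_coe_set_eq,
      Nat.card_congr (Equiv.Set.prod U V), Nat.card_prod,
      Nat.card_coe_set_eq, Nat.card_coe_set_eq]
  rintro ⟨u, v⟩ ⟨hu, hv⟩ ⟨u', v'⟩ ⟨hu', hv'⟩ h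
  simp only at h
  obtain ⟨h1, h2⟩ := List.append_inj h (by rw [hL u hu, hL u' hu'])
  simp [h1, h2, Prod.ext_iff]

lemma disjAB (n : ℕ) :
    Disjoint (concatSet (Aset (n+1)) (Bset (n+1))) (concatSet (Bset (n+1)) (Aset (n+1))) := by
  rw [Set.disjoint_left]
  rintro w ⟨u, hu, v, hv, rfl⟩ ⟨u', hu', v', hv', he⟩
  match n with
  | 0 =>
    simp only [Aset, Bset, Set.mem_singleton_iff] at hu hv hu' hv'
    subst hu hv hu' hv'
    simp at he
  | Nat.succ m =>
    obtain ⟨lenA, lenB, lastA, -⟩ := struct (m+1)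
    obtain ⟨-, -, -, midA⟩ := struct m
    have hul : u.length = Nat.fib (2*m+4) := by
      have := lenA u hu; rwa [show 2*(m+1)+2 = 2*m+4 by ring] at this
    have hul' : u'.length = Nat.fib (2*m+3) := by
      have := lenB u' hu'; rwa [show 2*(m+1)+1 = 2*m+3 by ring] at this
    have f2 : Nat.fib (2*m+4) = Nat.fib (2*m+2) + Nat.fib (2*m+3) := fib_shift' _ _ (by ring)
    have fpos2 : 0 < Nat.fib (2*m+2) := Nat.fib_pos.2 (by omega)
    have fpos3 : 0 < Nat.fib (2*m+3) := Nat.fib_pos.2 (by omega)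
    have hA : (u ++ v)[Nat.fib (2*m+4) - 1]? = some Letter.a := by
      rw [List.getElem?_append_left (by omega : Nat.fib (2*m+4) - 1 < u.length)]
      have := lastA u hu
      rwa [List.getLast?_eq_getElem?, hul] at this
    have hB : (u' ++ v')[Nat.fib (2*m+4) - 1]? = some Letter.b := by
      rw [List.getElem?_append_right (by omega : u'.length ≤ Nat.fib (2*m+4) - 1),
          show Nat.fib (2*m+4) - 1 - u'.length = Nat.fib (2*m+2) - 1 by omega]
      exact midA v' hv'
    rw [he, hB] at hA
    exact Letter.noConfusion (Option.some.inj hA)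

mutual
  def acard : ℕ → ℕ
    | 0 => 1
    | n+1 => bcard n * (acard n * acard n)
  def bcard : ℕ → ℕ
    | 0 => 1
    | n+1 => acard n * bcard n + bcard n * acard n
end

lemma cards (n : ℕ) :
    (Aset (n+1)).Finite ∧ (Bset (n+1)).Finite ∧
    (Aset (n+1)).ncard = acard n ∧ (Bset (n+1)).ncard = bcard n := by
  induction n with
  | zero =>
    refine ⟨?_, ?_, ?_, ?_⟩ <;> simp [Aset, Bset, acard, bcard]
  | succ n ih =>
    obtain ⟨hAf, hBf, hAc, hBc⟩ := ih
    have lenA := (struct n).1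
    have lenB := (struct n).2.1
    refine ⟨?_, ?_, ?_, ?_⟩
    · rw [aset_succ]; exact concat_finite hBf (concat_finite hAf hAf)
    · rw [bset_succ]; exact (concat_finite hAf hBf).union (concat_finite hBf hAf)
    · rw [aset_succ, concat_ncard lenB, concat_ncard lenA, hAc, hBc]
      rfl
    · rw [bset_succ,
        Set.ncard_union_eq (disjAB n) (concat_finite hAf hBf) (concat_finite hBf hAf),
        concat_ncard lenA, concat_ncard lenB, hAc, hBc]
      rfl

lemma card_pow (m : ℕ) :
    acard (m+1) = 2^(Nat.fib (2*m+1) - 1) ∧ bcard (m+1) = 2^(Nat.fib (2*m) + 1) := by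
  induction m with
  | zero => constructor <;> rfl
  | succ m ih =>
    obtain ⟨ha, hb⟩ := ih
    have f1 : Nat.fib (2*m+2) = Nat.fib (2*m) + Nat.fib (2*m+1) := fib_shift' _ _ (by ring)
    have f2 : Nat.fib (2*m+3) = Nat.fib (2*m+1) + Nat.fib (2*m+2) := fib_shift' _ _ (by ring)
    have hp : 1 ≤ Nat.fib (2*m+1) := Nat.fib_pos.2 (by omega)
    constructor
    · show bcard (m+1) * (acard (m+1) * acard (m+1)) = 2^(Nat.fib (2*(m+1)+1) - 1)
      rw [hb, ha, ← pow_add, ← pow_add, show 2*(m+1)+1 = 2*m+3 by ring]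
      congr 1
      omega
    · show acard (m+1) * bcard (m+1) + bcard (m+1) * acard (m+1) = 2^(Nat.fib (2*(m+1)) + 1)
      rw [ha, hb, ← pow_add, ← pow_add,
        show (Nat.fib (2*m) + 1) + (Nat.fib (2*m+1) - 1) = (Nat.fib (2*m+1) - 1) + (Nat.fib (2*m) + 1) by omega,
        ← two_mul, ← pow_succ', show 2*(m+1) = 2*m+2 by ring]
      congr 1
      omega

open Real goldenRatio Filter

lemma ratio_tendsto :
    Tendsto (fun m : ℕ => ((Nat.fib (2*m) : ℝ) + 1) / (Nat.fib (2*m+3) : ℝ))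
      atTop (nhds (1 / tau^3)) := by
  have h5 : (0:ℝ) < Real.sqrt 5 := Real.sqrt_pos.2 (by norm_num)
  have hphi : (1:ℝ) < φ := one_lt_goldenRatio
  have hpsi : |ψ| < 1 := abs_lt.2 ⟨neg_one_lt_goldenConj, by linarith [goldenConj_neg]⟩
  have habs1 : |ψ/φ| < 1 := by
    rw [abs_div, abs_of_pos goldenRatio_pos, div_lt_one goldenRatio_pos]
    linarith
  have habs2 : |(φ:ℝ)⁻¹| < 1 := by
    rw [abs_inv, abs_of_pos goldenRatio_pos]
    exact inv_lt_one_of_one_lt₀ hphi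
  have hc1 : |(ψ/φ)^2| < 1 := by
    rw [abs_pow]; exact pow_lt_one₀ (abs_nonneg _) habs1 (by norm_num)
  have hc2 : |((φ:ℝ)⁻¹)^2| < 1 := by
    rw [abs_pow]; exact pow_lt_one₀ (abs_nonneg _) habs2 (by norm_num)
  have l1 : Tendsto (fun m : ℕ => ((ψ/φ)^2)^m) atTop (nhds 0) :=
    tendsto_pow_atTop_nhds_zero_of_abs_lt_one hc1
  have l2 : Tendsto (fun m : ℕ => (((φ:ℝ)⁻¹)^2)^m) atTop (nhds 0) :=
    tendsto_pow_atTop_nhds_zero_of_abs_lt_one hc2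
  have hnum : Tendsto (fun m : ℕ => 1 - ((ψ/φ)^2)^m + Real.sqrt 5 * (((φ:ℝ)⁻¹)^2)^m)
      atTop (nhds 1) := by
    have := ((tendsto_const_nhds (x := (1:ℝ)) (f := atTop)).sub l1).add (l2.const_mul (Real.sqrt 5))
    simpa only [sub_zero, mul_zero, add_zero] using this
  have hden : Tendsto (fun m : ℕ => φ^3 - ψ^3 * ((ψ/φ)^2)^m) atTop (nhds (φ^3)) := by
    have := (tendsto_const_nhds (x := (φ^3:ℝ)) (f := atTop)).sub (l1.const_mul (ψ^3))
    simpa only [mul_zero, sub_zero] using this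
  have hphi3 : (φ:ℝ)^3 ≠ 0 := pow_ne_zero _ goldenRatio_ne_zero
  have main := hnum.div hden hphi3
  have heq : ∀ m : ℕ, ((Nat.fib (2*m) : ℝ) + 1) / (Nat.fib (2*m+3) : ℝ)
      = (1 - ((ψ/φ)^2)^m + Real.sqrt 5 * (((φ:ℝ)⁻¹)^2)^m) / (φ^3 - ψ^3 * ((ψ/φ)^2)^m) := by
    intro m
    have hx : ((ψ/φ)^2)^m * φ^(2*m) = ψ^(2*m) := by
      rw [← pow_mul, div_pow, div_mul_cancel₀]
      exact pow_ne_zero _ goldenRatio_ne_zero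
    have hy : (((φ:ℝ)⁻¹)^2)^m * φ^(2*m) = 1 := by
      rw [← pow_mul, inv_pow, inv_mul_cancel₀ (pow_ne_zero _ goldenRatio_ne_zero)]
    have h1 : ((Nat.fib (2*m):ℝ) + 1) = (φ^(2*m) - ψ^(2*m) + Real.sqrt 5)/Real.sqrt 5 := by
      rw [Real.coe_fib_eq, div_add_one h5.ne']
    have h2 : ((Nat.fib (2*m+3):ℝ)) = (φ^(2*m+3) - ψ^(2*m+3))/Real.sqrt 5 := Real.coe_fib_eq _
    rw [h1, h2, div_div_div_cancel_right₀ h5.ne']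
    have hnum_eq : φ^(2*m) - ψ^(2*m) + Real.sqrt 5
        = φ^(2*m) * (1 - ((ψ/φ)^2)^m + Real.sqrt 5 * (((φ:ℝ)⁻¹)^2)^m) := by
      linear_combination hx - Real.sqrt 5 * hy
    have hden_eq : φ^(2*m+3) - ψ^(2*m+3)
        = φ^(2*m) * (φ^3 - ψ^3 * ((ψ/φ)^2)^m) := by
      rw [pow_add, pow_add]
      linear_combination (ψ:ℝ)^3 * hx
    rw [hnum_eq, hden_eq, mul_div_mul_left _ _ (pow_ne_zero _ goldenRatio_ne_zero)]
  have htau : (1:ℝ) / tau^3 = 1 / φ^3 := rfl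
  rw [htau]
  apply main.congr
  intro m
  rw [Pi.div_apply, heq m]

theorem entropy_limit_B :
    Filter.Tendsto
      (fun n : ℕ => Real.log ((Bset n).ncard) / (Nat.fib (2 * n - 1) : ℝ))
      Filter.atTop (nhds ((1 / tau ^ 3) * Real.log 2)) := by
  rw [← Filter.tendsto_add_atTop_iff_nat 2]
  have h := ratio_tendsto.mul_const (Real.log 2)
  apply h.congr
  intro m
  have hB : (Bset (m+2)).ncard = 2^(Nat.fib (2*m) + 1) := by
    rw [(cards (m+1)).2.2.2, (card_pow m).2]
  show ((Nat.fib (2*m) : ℝ) + 1) / (Nat.fib (2*m+3) : ℝ) * Real.log 2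
      = Real.log (((Bset (m+2)).ncard : ℕ) : ℝ) / (Nat.fib (2*(m+2)-1) : ℝ)
  rw [hB, show 2*(m+2)-1 = 2*m+3 by omega]
  push_cast
  rw [Real.log_pow]
  push_cast
  ring
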